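/- arXiv:2312.00630 — 2 statements merged into one kernel-verified Lean document; each statement's English description precedes it below -/
import Mathlib

section
/- Let B₁ and B₂ be disks of radii r₁, r₂ centered at c₁ = (−r₁ − ε/2, 0) and c₂ = (r₂ + ε/2, 0) respectively, with ε > 0, so that dist(B₁, B₂) = ε. Then the composition R₁∘R₂ of the reflections in ∂B₂ and ∂B₁ has a fixed point p₁ lying inside B₁ on the x₁-axis, and as ε → 0, p₁ = (−√2 √(r₁r₂/(r₁+r₂)) √ε + O(ε), 0). In particular |p₁| / √ε → √(2 r₁ r₂/(r₁+r₂)) as ε → 0⁺. -/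
open Real Filter

/-- Euclidean norm on `ℝ × ℝ`. -/
noncomputable def enorm2 (x : ℝ × ℝ) : ℝ := Real.sqrt (x.1 ^ 2 + x.2 ^ 2)

/-- Inversion (reflection) in the circle of radius `r` centered at `c`. -/
noncomputable def circleRefl (c : ℝ × ℝ) (r : ℝ) (x : ℝ × ℝ) : ℝ × ℝ :=
  c + (r ^ 2 / ((x.1 - c.1) ^ 2 + (x.2 - c.2) ^ 2)) • (x - c)

/-- The first coordinate of the fixed point `p₁(ε)`. -/
noncomputable def pX (r₁ r₂ ε : ℝ) : ℝ :=
  -((ε * (r₁ - r₂) + Real.sqrt (ε * ((2*r₁+ε) * (2*r₂+ε) * (2*r₁+2*r₂+ε)))) / (2 * (r₁+r₂+ε)))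

lemma circleRefl_axis (c r x : ℝ) (h : x ≠ c) :
    circleRefl (c,0) r (x,0) = (c + r^2/(x-c), 0) := by
  have hx : x - c ≠ 0 := sub_ne_zero.mpr h
  simp only [circleRefl, Prod.mk_sub_mk, Prod.smul_mk, Prod.mk_add_mk, smul_eq_mul,
    Prod.mk.injEq]
  refine ⟨by field_simp; ring, by ring⟩

lemma s_sq {r₁ r₂ ε : ℝ} (hr₁ : 0 < r₁) (hr₂ : 0 < r₂) (hε : 0 < ε) :
    (Real.sqrt (ε * ((2*r₁+ε) * (2*r₂+ε) * (2*r₁+2*r₂+ε))))^2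
    = ε * ((2*r₁+ε) * (2*r₂+ε) * (2*r₁+2*r₂+ε)) := by
  apply Real.sq_sqrt; positivity

lemma num_pos {r₁ r₂ ε : ℝ} (hr₁ : 0 < r₁) (hr₂ : 0 < r₂) (hε : 0 < ε) :
    0 < ε * (r₁ - r₂) + Real.sqrt (ε * ((2*r₁+ε) * (2*r₂+ε) * (2*r₁+2*r₂+ε))) := by
  have hs2 := s_sq hr₁ hr₂ hε
  have hs0 : 0 ≤ Real.sqrt (ε * ((2*r₁+ε) * (2*r₂+ε) * (2*r₁+2*r₂+ε))) := Real.sqrt_nonneg _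
  have hM1 : ε*(r₁-r₂)^2 < (2*r₁+ε) * (2*r₂+ε) * (2*r₁+2*r₂+ε) := by
    nlinarith [mul_pos hr₁ hr₂, sq_nonneg (r₁+r₂), mul_pos hε hε, mul_pos (mul_pos hr₁ hr₂) hε]
  have h3 : ε * (ε*(r₁-r₂)^2) < ε * ((2*r₁+ε) * (2*r₂+ε) * (2*r₁+2*r₂+ε)) :=
    (mul_lt_mul_iff_right₀ hε).2 hM1
  nlinarith [hs0, hs2, h3]

lemma pX_neg {r₁ r₂ ε : ℝ} (hr₁ : 0 < r₁) (hr₂ : 0 < r₂) (hε : 0 < ε) : pX r₁ r₂ ε < 0 := by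
  have h := num_pos hr₁ hr₂ hε
  have hS : (0:ℝ) < 2 * (r₁+r₂+ε) := by positivity
  have := div_pos h hS
  unfold pX; linarith

lemma pX_lower {r₁ r₂ ε : ℝ} (hr₁ : 0 < r₁) (hr₂ : 0 < r₂) (hε : 0 < ε) :
    0 < pX r₁ r₂ ε + (r₁ + ε/2) := by
  have hs2 := s_sq hr₁ hr₂ hε
  have hs0 : 0 ≤ Real.sqrt (ε * ((2*r₁+ε) * (2*r₂+ε) * (2*r₁+2*r₂+ε))) := Real.sqrt_nonneg _
  have hS : (0:ℝ) < 2 * (r₁+r₂+ε) := by positivity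
  have key : ε * (r₁ - r₂) + Real.sqrt (ε * ((2*r₁+ε) * (2*r₂+ε) * (2*r₁+2*r₂+ε)))
      < (2 * (r₁+r₂+ε)) * (r₁ + ε/2) := by
    nlinarith [hs0, hs2,
      mul_pos (mul_pos hr₁ hr₁) (mul_pos (show (0:ℝ) < r₁+r₂+ε by positivity) (show (0:ℝ) < r₁+r₂+ε by positivity)),
      mul_pos hr₁ (show (0:ℝ) < r₁+r₂+ε by positivity),
      mul_pos hε (show (0:ℝ) < 2*r₂+ε by positivity)]
  unfold pX
  have h2 : (ε * (r₁ - r₂) + Real.sqrt (ε * ((2*r₁+ε) * (2*r₂+ε) * (2*r₁+2*r₂+ε)))) / (2 * (r₁+r₂+ε)) < r₁ + ε/2 :=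
    (div_lt_iff₀ hS).2 (by linarith [key])
  linarith

lemma pX_upper {r₁ r₂ ε : ℝ} (hr₁ : 0 < r₁) (hr₂ : 0 < r₂) (hε : 0 < ε) :
    pX r₁ r₂ ε + (r₁ + ε/2) < r₁ := by
  have hs2 := s_sq hr₁ hr₂ hε
  have hs0 : 0 ≤ Real.sqrt (ε * ((2*r₁+ε) * (2*r₂+ε) * (2*r₁+2*r₂+ε))) := Real.sqrt_nonneg _
  have hS : (0:ℝ) < 2 * (r₁+r₂+ε) := by positivity
  have hgt : ε * (2*r₂+ε) < Real.sqrt (ε * ((2*r₁+ε) * (2*r₂+ε) * (2*r₁+2*r₂+ε))) := by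
    have h1 : ε*(2*r₂+ε)^2 < (2*r₁+ε) * (2*r₂+ε) * (2*r₁+2*r₂+ε) := by
      nlinarith [mul_pos hr₁ hr₂, mul_pos hε hr₂, mul_pos hε hε, mul_pos hr₁ hε,
        mul_pos hr₂ hr₂, mul_pos hr₁ hr₁]
    nlinarith [hs0, hs2, mul_pos hε (mul_pos hε (mul_pos (show (0:ℝ)<2*r₂+ε by positivity) (show (0:ℝ)<2*r₂+ε by positivity))), (mul_lt_mul_iff_right₀ hε).2 h1,
      mul_pos hε (show (0:ℝ) < 2*r₂+ε by positivity)]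
  unfold pX
  have h2 : ε/2 < (ε * (r₁ - r₂) + Real.sqrt (ε * ((2*r₁+ε) * (2*r₂+ε) * (2*r₁+2*r₂+ε)))) / (2 * (r₁+r₂+ε)) :=
    (lt_div_iff₀ hS).2 (by nlinarith [hgt])
  linarith

lemma pX_poly {r₁ r₂ ε : ℝ} (hr₁ : 0 < r₁) (hr₂ : 0 < r₂) (hε : 0 < ε) :
    (2*(r₁+r₂+ε) * pX r₁ r₂ ε + ε*(r₁-r₂))^2
      = ε*((2*r₁+ε) * (2*r₂+ε) * (2*r₁+2*r₂+ε)) := by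
  have hs2 := s_sq hr₁ hr₂ hε
  have hS : (2 * (r₁+r₂+ε)) ≠ 0 := by positivity
  have hd : 2*(r₁+r₂+ε) * pX r₁ r₂ ε
      = -(ε * (r₁ - r₂) + Real.sqrt (ε * ((2*r₁+ε) * (2*r₂+ε) * (2*r₁+2*r₂+ε)))) := by
    unfold pX
    rw [mul_neg, mul_div_cancel₀ _ hS]
  rw [hd]
  linear_combination hs2

lemma fixed_point_eq {r₁ r₂ ε x : ℝ} (hr₁ : 0 < r₁) (hr₂ : 0 < r₂) (hε : 0 < ε)
    (hxneg : x < 0) (hxl : 0 < x + (r₁ + ε/2))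
    (hpoly : (2*(r₁+r₂+ε)*x + ε*(r₁-r₂))^2 = ε*((2*r₁+ε) * (2*r₂+ε) * (2*r₁+2*r₂+ε))) :
    circleRefl ((-r₁ - ε / 2, 0) : ℝ × ℝ) r₁
      (circleRefl ((r₂ + ε / 2, 0) : ℝ × ℝ) r₂ ((x,0) : ℝ × ℝ)) = (x,0) := by
  have hxb : x - (r₂ + ε/2) < 0 := by linarith
  have hxbne' : x - (r₂ + ε/2) ≠ 0 := ne_of_lt hxb
  have hxbne : x ≠ r₂ + ε/2 := by intro h; rw [h] at hxneg; linarith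
  have hquad : (x + (r₁+ε/2)) * ((r₁+r₂+ε)*(x - (r₂+ε/2)) + r₂^2) - r₁^2*(x-(r₂+ε/2)) = 0 := by
    apply mul_left_cancel₀ (show (4*(r₁+r₂+ε)) ≠ 0 by positivity)
    linear_combination hpoly
  have hy0 : 0 < (r₂+ε/2) + r₂^2/(x - (r₂+ε/2)) := by
    have h2 : (r₂+ε/2) + r₂^2/(x - (r₂+ε/2))
        = ((r₂+ε/2)*(x-(r₂+ε/2)) + r₂^2)/(x-(r₂+ε/2)) := by
      rw [eq_div_iff hxbne', add_mul, div_mul_cancel₀ _ hxbne']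
    rw [h2]
    apply div_pos_of_neg_of_neg _ hxb
    nlinarith [mul_pos hε hr₂, mul_pos hε hε]
  have hyne : (r₂ + ε/2) + r₂^2/(x-(r₂+ε/2)) ≠ (-r₁ - ε/2) := by
    intro h; rw [h] at hy0; linarith
  rw [circleRefl_axis _ _ _ hxbne, circleRefl_axis _ _ _ hyne]
  have hyane : (r₂ + ε/2) + r₂^2/(x-(r₂+ε/2)) - (-r₁ - ε/2) ≠ 0 := by
    intro h; apply hyne; linarith [sub_eq_zero.mp h]
  rw [Prod.mk.injEq]
  refine ⟨?_, rfl⟩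
  have hDrw : (r₂ + ε/2) + r₂^2/(x-(r₂+ε/2)) - (-r₁ - ε/2)
      = ((r₁+r₂+ε)*(x-(r₂+ε/2)) + r₂^2)/(x-(r₂+ε/2)) := by
    rw [eq_div_iff hxbne', sub_mul, add_mul, div_mul_cancel₀ _ hxbne']
    ring
  have hPneg : (r₁+r₂+ε)*(x-(r₂+ε/2)) + r₂^2 < 0 := by
    have heq : (r₁+r₂+ε)*(x-(r₂+ε/2)) + r₂^2
        = ((r₂+ε/2) + r₂^2/(x-(r₂+ε/2)) + (r₁+ε/2)) * (x-(r₂+ε/2)) := by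
      conv_rhs => rw [add_mul, add_mul, div_mul_cancel₀ _ hxbne']
      ring
    rw [heq]
    exact mul_neg_of_pos_of_neg (by linarith) hxb
  have hP : (r₁+r₂+ε)*(x-(r₂+ε/2)) + r₂^2 ≠ 0 := ne_of_lt hPneg
  rw [hDrw, div_div_eq_mul_div]
  rw [show (-r₁ - ε/2 + r₁^2 * (x-(r₂+ε/2)) / ((r₁+r₂+ε)*(x-(r₂+ε/2)) + r₂^2) = x)
      ↔ (r₁^2 * (x-(r₂+ε/2)) / ((r₁+r₂+ε)*(x-(r₂+ε/2)) + r₂^2) = x + r₁ + ε/2) from by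
    constructor <;> intro h <;> linarith]
  rw [div_eq_iff hP]
  linear_combination -hquad

lemma bridge {r₁ r₂ ε : ℝ} (hr₁ : 0 < r₁) (hr₂ : 0 < r₂) (hε : 0 < ε) :
    enorm2 ((pX r₁ r₂ ε, 0)) / Real.sqrt ε
    = (Real.sqrt ε * (r₁-r₂) + Real.sqrt ((2*r₁+ε) * (2*r₂+ε) * (2*r₁+2*r₂+ε)))
        / (2 * (r₁+r₂+ε)) := by
  have hx := pX_neg hr₁ hr₂ hε
  have h1 : enorm2 ((pX r₁ r₂ ε, 0)) = -(pX r₁ r₂ ε) := by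
    unfold enorm2
    simp only [ne_eq, OfNat.ofNat_ne_zero, not_false_eq_true, zero_pow, add_zero]
    rw [Real.sqrt_sq_eq_abs, abs_of_neg hx]
  rw [h1]
  unfold pX
  rw [neg_neg, Real.sqrt_mul hε.le]
  rw [div_div, div_eq_div_iff (by positivity) (by positivity)]
  have hss : Real.sqrt ε * Real.sqrt ε = ε := Real.mul_self_sqrt hε.le
  linear_combination (-(2*(r₁+r₂+ε))*(r₁-r₂)) * hss

/-- For disks `B₁, B₂` of radii `r₁, r₂` centered at `c₁ = (−r₁−ε/2, 0)` and
`c₂ = (r₂+ε/2, 0)` (so that `dist(B₁,B₂) = ε`), the composition `R₁∘R₂` of the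
reflections has a fixed point `p₁ = p₁(ε)` lying inside `B₁` on the `x₁`-axis,
with the asymptotics `|p₁|/√ε → √(2 r₁ r₂/(r₁+r₂))` as `ε → 0⁺`. -/
theorem mixed_reflection_fixed_point_asymptotics
    (r₁ r₂ : ℝ) (hr₁ : 0 < r₁) (hr₂ : 0 < r₂) :
    ∃ p : ℝ → ℝ × ℝ,
      (∀ ε : ℝ, 0 < ε →
        circleRefl ((-r₁ - ε / 2, 0) : ℝ × ℝ) r₁
            (circleRefl ((r₂ + ε / 2, 0) : ℝ × ℝ) r₂ (p ε)) = p ε ∧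
        enorm2 (p ε - ((-r₁ - ε / 2, 0) : ℝ × ℝ)) < r₁ ∧
        (p ε).2 = 0 ∧ (p ε).1 < 0) ∧
      Tendsto (fun ε => enorm2 (p ε) / Real.sqrt ε) (nhdsWithin 0 (Set.Ioi 0))
        (nhds (Real.sqrt (2 * r₁ * r₂ / (r₁ + r₂)))) := by
  refine ⟨fun ε => (pX r₁ r₂ ε, 0), ?_, ?_⟩
  · intro ε hε
    refine ⟨fixed_point_eq hr₁ hr₂ hε (pX_neg hr₁ hr₂ hε) (pX_lower hr₁ hr₂ hε)
      (pX_poly hr₁ hr₂ hε), ?_, rfl, pX_neg hr₁ hr₂ hε⟩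
    have hl := pX_lower hr₁ hr₂ hε
    have hu := pX_upper hr₁ hr₂ hε
    unfold enorm2
    simp only [Prod.mk_sub_mk, sub_zero]
    rw [show (pX r₁ r₂ ε - (-r₁ - ε/2))^2 + (0:ℝ)^2 = (pX r₁ r₂ ε + (r₁ + ε/2))^2 by ring,
      Real.sqrt_sq hl.le]
    linarith
  · have htg : Tendsto (fun ε => (Real.sqrt ε * (r₁-r₂)
        + Real.sqrt ((2*r₁+ε) * (2*r₂+ε) * (2*r₁+2*r₂+ε))) / (2 * (r₁+r₂+ε)))
        (nhdsWithin 0 (Set.Ioi 0)) (nhds (Real.sqrt (2 * r₁ * r₂ / (r₁ + r₂)))) := by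
      have hL : Real.sqrt (2 * r₁ * r₂ / (r₁ + r₂))
          = (Real.sqrt 0 * (r₁-r₂) + Real.sqrt ((2*r₁+0) * (2*r₂+0) * (2*r₁+2*r₂+0))) / (2 * (r₁+r₂+0)) := by
        rw [Real.sqrt_zero, zero_mul, zero_add, add_zero, add_zero, add_zero, add_zero]
        rw [show (2*r₁) * (2*r₂) * (2*r₁+2*r₂) = (2 * r₁ * r₂ / (r₁ + r₂)) * (2*(r₁+r₂))^2 by
          field_simp]
        rw [Real.sqrt_mul (by positivity), Real.sqrt_sq (by positivity)]
        rw [mul_div_cancel_right₀ _ (show (2*(r₁+r₂):ℝ) ≠ 0 by positivity)]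
      rw [hL]
      apply Filter.Tendsto.mono_left _ nhdsWithin_le_nhds
      apply ContinuousAt.tendsto
      apply ContinuousAt.div
      · fun_prop
      · fun_prop
      · positivity
    refine htg.congr' ?_
    filter_upwards [self_mem_nhdsWithin] with ε hε
    exact (bridge hr₁ hr₂ hε).symm
end

section
/- Let D be a bounded domain in ℝ² with smooth boundary and let u be harmonic in ℝ² \ D̄, continuous up to ∂D, constant on ∂D, with u(x) → 0 as |x| → ∞ and ∮_{∂D} ∂u/∂ν|₊ ds = 0. Then u ≡ 0 in ℝ² \ D̄. -/
open Real Filter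
open Set

/-- The Laplacian `∂²f/∂x₁² + ∂²f/∂x₂²` of `f : ℝ × ℝ → ℝ`. -/
noncomputable def lap (f : ℝ × ℝ → ℝ) (x : ℝ × ℝ) : ℝ :=
  deriv (fun s => deriv (fun t => f (t, x.2)) s) x.1 +
  deriv (fun s => deriv (fun t => f (x.1, t)) s) x.2

/-- The gradient of `f : ℝ × ℝ → ℝ` as a pair of partial derivatives. -/
noncomputable def grad2 (f : ℝ × ℝ → ℝ) (x : ℝ × ℝ) : ℝ × ℝ :=
  (fderiv ℝ f x (1, 0), fderiv ℝ f x (0, 1))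


lemma second_deriv_test {g : ℝ → ℝ} {t₀ a : ℝ}
    (hdiff : ∀ᶠ t in nhds t₀, DifferentiableAt ℝ g t)
    (h2 : HasDerivAt (deriv g) a t₀)
    (hmax : IsLocalMax g t₀) : a ≤ 0 := by
  by_contra hc
  push_neg at hc
  have h0 : deriv g t₀ = 0 := hmax.deriv_eq_zero
  have hs : Tendsto (slope (deriv g) t₀) (nhdsWithin t₀ {t₀}ᶜ) (nhds a) :=
    hasDerivAt_iff_tendsto_slope.1 h2
  have hs' : Tendsto (slope (deriv g) t₀) (nhdsWithin t₀ (Ioi t₀)) (nhds a) :=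
    hs.mono_left (nhdsWithin_mono _ (fun x hx => ne_of_gt hx))
  have hpos : ∀ᶠ x in nhdsWithin t₀ (Ioi t₀), 0 < slope (deriv g) t₀ x :=
    hs'.eventually_const_lt hc
  have hpos' : ∀ᶠ x in nhdsWithin t₀ (Ioi t₀), 0 < deriv g x := by
    filter_upwards [hpos, self_mem_nhdsWithin] with x hx hx'
    have h1 : 0 < (deriv g x - deriv g t₀) / (x - t₀) := by
      simpa [slope_def_field] using hx
    rw [h0, sub_zero] at h1
    have hxt : (0:ℝ) < x - t₀ := sub_pos.2 hx'
    rcases div_pos_iff.1 h1 with ⟨h2', _⟩ | ⟨_, h3'⟩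
    · exact h2'
    · linarith
  rcases Metric.eventually_nhds_iff.1 (hdiff.and hmax) with ⟨δ₁, hδ₁, hball⟩
  rcases (mem_nhdsGT_iff_exists_Ioo_subset).1 hpos' with ⟨b, hb, hIoo⟩
  have hbt : t₀ < b := hb
  set δ : ℝ := min (δ₁ / 2) ((b - t₀) / 2) with hδdef
  have hδpos : 0 < δ := lt_min (by linarith) (by linarith)
  have hδ1 : δ < δ₁ := by
    have : δ ≤ δ₁ / 2 := min_le_left _ _
    linarith
  have hδb : t₀ + δ < b := by
    have : δ ≤ (b - t₀)/2 := min_le_right _ _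
    linarith
  have hmono : StrictMonoOn g (Icc t₀ (t₀ + δ)) := by
    apply strictMonoOn_of_deriv_pos (convex_Icc _ _)
    · intro x hx
      have hd : dist x t₀ < δ₁ := by
        rw [Real.dist_eq, abs_lt]
        rcases hx with ⟨h1', h2'⟩
        constructor <;> linarith
      exact ((hball hd).1.continuousAt).continuousWithinAt
    · intro x hx
      rw [interior_Icc] at hx
      exact hIoo ⟨hx.1, lt_trans hx.2 hδb⟩
  have hlt : g t₀ < g (t₀ + δ) :=
    hmono (left_mem_Icc.2 (by linarith)) (right_mem_Icc.2 (by linarith)) (by linarith)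
  have hd : dist (t₀ + δ) t₀ < δ₁ := by
    rw [Real.dist_eq, abs_lt]; constructor <;> linarith
  have hle : g (t₀ + δ) ≤ g t₀ := (hball hd).2
  linarith

/-- Good behaviour of both coordinate slices of `f` near `z`. -/
structure NiceAt (f : ℝ × ℝ → ℝ) (z : ℝ × ℝ) : Prop where
  d1 : ∀ᶠ t in nhds z.1, DifferentiableAt ℝ (fun s => f (s, z.2)) t
  d1' : DifferentiableAt ℝ (deriv (fun s => f (s, z.2))) z.1
  d2 : ∀ᶠ t in nhds z.2, DifferentiableAt ℝ (fun s => f (z.1, s)) t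
  d2' : DifferentiableAt ℝ (deriv (fun s => f (z.1, s))) z.2

-- 1D second-derivative additivity
lemma deriv2_add {F G : ℝ → ℝ} {x : ℝ}
    (hF : ∀ᶠ t in nhds x, DifferentiableAt ℝ F t)
    (hG : ∀ᶠ t in nhds x, DifferentiableAt ℝ G t)
    (hF' : DifferentiableAt ℝ (deriv F) x) (hG' : DifferentiableAt ℝ (deriv G) x) :
    deriv (deriv (fun t => F t + G t)) x = deriv (deriv F) x + deriv (deriv G) x := by
  have h1 : deriv (fun t => F t + G t) =ᶠ[nhds x] fun t => deriv F t + deriv G t := by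
    filter_upwards [hF, hG] with t hFt hGt
    exact deriv_add hFt hGt
  rw [h1.deriv_eq, deriv_fun_add hF' hG']

lemma derivfun_add_eventually {F G : ℝ → ℝ} {x : ℝ}
    (hF : ∀ᶠ t in nhds x, DifferentiableAt ℝ F t)
    (hG : ∀ᶠ t in nhds x, DifferentiableAt ℝ G t) :
    deriv (fun t => F t + G t) =ᶠ[nhds x] fun t => deriv F t + deriv G t := by
  filter_upwards [hF, hG] with t hFt hGt
  exact deriv_add hFt hGt

lemma NiceAt.add {f g : ℝ × ℝ → ℝ} {z : ℝ × ℝ} (hf : NiceAt f z) (hg : NiceAt g z) :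
    NiceAt (fun x => f x + g x) z := by
  refine ⟨?_, ?_, ?_, ?_⟩
  · filter_upwards [hf.d1, hg.d1] with t h1 h2; exact h1.add h2
  · exact ((derivfun_add_eventually hf.d1 hg.d1).differentiableAt_iff).2 (hf.d1'.add hg.d1')
  · filter_upwards [hf.d2, hg.d2] with t h1 h2; exact h1.add h2
  · exact ((derivfun_add_eventually hf.d2 hg.d2).differentiableAt_iff).2 (hf.d2'.add hg.d2')

lemma lap_add {f g : ℝ × ℝ → ℝ} {z : ℝ × ℝ} (hf : NiceAt f z) (hg : NiceAt g z) :
    lap (fun x => f x + g x) z = lap f z + lap g z := by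
  unfold lap
  rw [deriv2_add hf.d1 hg.d1 hf.d1' hg.d1', deriv2_add hf.d2 hg.d2 hf.d2' hg.d2']
  ring

lemma derivfun_const_mul_eventually (a : ℝ) {F : ℝ → ℝ} {x : ℝ}
    (hF : ∀ᶠ t in nhds x, DifferentiableAt ℝ F t) :
    deriv (fun t => a * F t) =ᶠ[nhds x] fun t => a * deriv F t := by
  filter_upwards [hF] with t hFt
  exact deriv_const_mul a hFt

lemma NiceAt.const_mul {f : ℝ × ℝ → ℝ} {z : ℝ × ℝ} (a : ℝ) (hf : NiceAt f z) :
    NiceAt (fun x => a * f x) z := by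
  refine ⟨?_, ?_, ?_, ?_⟩
  · filter_upwards [hf.d1] with t h1; exact h1.const_mul a
  · exact ((derivfun_const_mul_eventually a hf.d1).differentiableAt_iff).2 (hf.d1'.const_mul a)
  · filter_upwards [hf.d2] with t h1; exact h1.const_mul a
  · exact ((derivfun_const_mul_eventually a hf.d2).differentiableAt_iff).2 (hf.d2'.const_mul a)

lemma lap_const_mul {f : ℝ × ℝ → ℝ} {z : ℝ × ℝ} (a : ℝ) (hf : NiceAt f z) :
    lap (fun x => a * f x) z = a * lap f z := by
  unfold lap
  rw [(derivfun_const_mul_eventually a hf.d1).deriv_eq,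
      (derivfun_const_mul_eventually a hf.d2).deriv_eq,
      deriv_const_mul a hf.d1', deriv_const_mul a hf.d2']
  ring

lemma NiceAt.add_const {f : ℝ × ℝ → ℝ} {z : ℝ × ℝ} (hf : NiceAt f z) (c : ℝ) :
    NiceAt (fun x => f x + c) z := by
  refine ⟨?_, ?_, ?_, ?_⟩
  · filter_upwards [hf.d1] with t h1; exact h1.add_const c
  · have : (deriv fun s => f (s, z.2) + c) = deriv fun s => f (s, z.2) := by
      funext t; exact deriv_add_const c
    rw [show (fun s => f (s, z.2) + c) = (fun s => f (s, z.2) + c) from rfl]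
    simpa [this] using hf.d1'
  · filter_upwards [hf.d2] with t h1; exact h1.add_const c
  · have : (deriv fun s => f (z.1, s) + c) = deriv fun s => f (z.1, s) := by
      funext t; exact deriv_add_const c
    simpa [this] using hf.d2'

lemma lap_add_const {f : ℝ × ℝ → ℝ} {z : ℝ × ℝ} (c : ℝ) :
    lap (fun x => f x + c) z = lap f z := by
  unfold lap
  have h1 : (deriv fun s => f (s, z.2) + c) = deriv fun s => f (s, z.2) := by
    funext t; exact deriv_add_const c
  have h2 : (deriv fun s => f (z.1, s) + c) = deriv fun s => f (z.1, s) := by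
    funext t; exact deriv_add_const c
  rw [h1, h2]

-- interior strict maximum exclusion
lemma no_interior_max {w : ℝ × ℝ → ℝ} {z : ℝ × ℝ} (hw : NiceAt w z)
    (hpos : 0 < lap w z) (hmax : IsLocalMax w z) : False := by
  have hm1 : IsLocalMax (fun t => w (t, z.2)) z.1 := by
    have ht : Filter.Tendsto (fun t : ℝ => ((t, z.2) : ℝ × ℝ)) (nhds z.1) (nhds z) := by
      have : Filter.Tendsto (fun t : ℝ => ((t, z.2) : ℝ × ℝ)) (nhds z.1) (nhds (z.1, z.2)) :=
        (continuous_id.prodMk continuous_const).tendsto z.1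
      simpa using this
    exact IsMaxFilter.comp_tendsto (g := fun t : ℝ => ((t, z.2) : ℝ × ℝ)) (b := z.1) hmax ht
  have hm2 : IsLocalMax (fun t => w (z.1, t)) z.2 := by
    have ht : Filter.Tendsto (fun t : ℝ => ((z.1, t) : ℝ × ℝ)) (nhds z.2) (nhds z) := by
      have : Filter.Tendsto (fun t : ℝ => ((z.1, t) : ℝ × ℝ)) (nhds z.2) (nhds (z.1, z.2)) :=
        (continuous_const.prodMk continuous_id).tendsto z.2
      simpa using this
    exact IsMaxFilter.comp_tendsto (g := fun t : ℝ => ((z.1, t) : ℝ × ℝ)) (b := z.2) hmax ht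
  have h1 : deriv (deriv (fun t => w (t, z.2))) z.1 ≤ 0 :=
    second_deriv_test hw.d1 hw.d1'.hasDerivAt hm1
  have h2 : deriv (deriv (fun t => w (z.1, t))) z.2 ≤ 0 :=
    second_deriv_test hw.d2 hw.d2'.hasDerivAt hm2
  unfold lap at hpos
  linarith

lemma max_principle {Ω : Set (ℝ × ℝ)} (hΩ : IsOpen Ω) (hcomp : IsCompact (closure Ω))
    {w : ℝ × ℝ → ℝ} {M : ℝ} (hwc : ContinuousOn w (closure Ω))
    (hnice : ∀ z ∈ Ω, NiceAt w z) (hlap : ∀ z ∈ Ω, 0 < lap w z)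
    (hbd : ∀ z ∈ frontier Ω, w z ≤ M) : ∀ x ∈ Ω, w x ≤ M := by
  intro x hx
  obtain ⟨z, hz, hzmax⟩ := hcomp.exists_isMaxOn ⟨x, subset_closure hx⟩ hwc
  by_cases hzΩ : z ∈ Ω
  · exact (no_interior_max (hnice z hzΩ) (hlap z hzΩ)
      (hzmax.isLocalMax (Filter.mem_of_superset (hΩ.mem_nhds hzΩ) subset_closure))).elim
  · have hzf : z ∈ frontier Ω := by
      rw [frontier, hΩ.interior_eq]
      exact ⟨hz, hzΩ⟩
    exact le_trans (isMaxOn_iff.1 hzmax x (subset_closure hx)) (hbd z hzf)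


lemma sq_slice {f : ℝ → ℝ} (α c t₀ : ℝ) (hfun : ∀ t, f t = (t - α) ^ 2 + c) :
    (∀ᶠ t in nhds t₀, DifferentiableAt ℝ f t) ∧
    DifferentiableAt ℝ (deriv f) t₀ ∧ deriv (deriv f) t₀ = 2 := by
  have hf : f = fun t => (t - α) ^ 2 + c := funext hfun
  subst hf
  have hD : ∀ t : ℝ, HasDerivAt (fun t => (t - α) ^ 2 + c) (2 * (t - α)) t := by
    intro t
    have h1 : HasDerivAt (fun t : ℝ => t - α) 1 t := (hasDerivAt_id t).sub_const α
    simpa using (h1.pow 2).add_const c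
  have heq : deriv (fun t => (t - α) ^ 2 + c) = fun t => 2 * (t - α) := by
    funext t; exact (hD t).deriv
  refine ⟨Eventually.of_forall (fun t => (hD t).differentiableAt), ?_, ?_⟩
  · rw [heq]
    have h2 : HasDerivAt (fun t : ℝ => 2 * (t - α)) 2 t₀ := by
      simpa using ((hasDerivAt_id t₀).sub_const α).const_mul 2
    exact h2.differentiableAt
  · rw [heq]
    have h2 : HasDerivAt (fun t : ℝ => 2 * (t - α)) 2 t₀ := by
      simpa using ((hasDerivAt_id t₀).sub_const α).const_mul 2
    exact h2.deriv

lemma log_slice {f : ℝ → ℝ} (α β t₀ : ℝ)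
    (hfun : ∀ t, f t = 1 / 2 * Real.log ((t - α) ^ 2 + β))
    (h : 0 < (t₀ - α) ^ 2 + β) :
    (∀ᶠ t in nhds t₀, DifferentiableAt ℝ f t) ∧
    DifferentiableAt ℝ (deriv f) t₀ ∧
    deriv (deriv f) t₀ = (β - (t₀ - α) ^ 2) / ((t₀ - α) ^ 2 + β) ^ 2 := by
  have hf : f = fun t => 1 / 2 * Real.log ((t - α) ^ 2 + β) := funext hfun
  subst hf
  have hdenc : Continuous (fun t : ℝ => (t - α) ^ 2 + β) := by continuity
  have hpos : ∀ᶠ t in nhds t₀, 0 < (t - α) ^ 2 + β :=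
    (hdenc.tendsto t₀).eventually_const_lt h
  have hDden : ∀ t : ℝ, HasDerivAt (fun t => (t - α) ^ 2 + β) (2 * (t - α)) t := by
    intro t
    have h1 : HasDerivAt (fun t : ℝ => t - α) 1 t := (hasDerivAt_id t).sub_const α
    simpa using (h1.pow 2).add_const β
  have hev : ∀ᶠ t in nhds t₀,
      HasDerivAt (fun t => 1 / 2 * Real.log ((t - α) ^ 2 + β))
        ((t - α) / ((t - α) ^ 2 + β)) t := by
    filter_upwards [hpos] with t ht
    have h2 := ((hDden t).log (ne_of_gt ht)).const_mul (1 / 2 : ℝ)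
    rw [show (t - α) / ((t - α) ^ 2 + β) = 1 / 2 * (2 * (t - α) / ((t - α) ^ 2 + β)) by ring]
    exact h2
  have hev_diff : ∀ᶠ t in nhds t₀,
      DifferentiableAt ℝ (fun t => 1 / 2 * Real.log ((t - α) ^ 2 + β)) t :=
    hev.mono (fun t ht => ht.differentiableAt)
  have heq : deriv (fun t => 1 / 2 * Real.log ((t - α) ^ 2 + β))
      =ᶠ[nhds t₀] fun t => (t - α) / ((t - α) ^ 2 + β) :=
    hev.mono (fun t ht => ht.deriv)
  have hG : HasDerivAt (fun t : ℝ => (t - α) / ((t - α) ^ 2 + β))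
      ((1 * ((t₀ - α) ^ 2 + β) - (t₀ - α) * (2 * (t₀ - α))) / ((t₀ - α) ^ 2 + β) ^ 2) t₀ :=
    ((hasDerivAt_id t₀).sub_const α).div (hDden t₀) (ne_of_gt h)
  refine ⟨hev_diff, ?_, ?_⟩
  · rw [heq.differentiableAt_iff]
    exact hG.differentiableAt
  · rw [heq.deriv_eq, hG.deriv]
    ring_nf

lemma nonpos_of_forall_le_mul {a Q : ℝ} (hQ : 0 ≤ Q) (h : ∀ η > 0, a ≤ η * Q) : a ≤ 0 := by
  by_contra hc
  push_neg at hc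
  have h1 := h (a / (2 * (Q + 1))) (by positivity)
  have h2 : a / (2 * (Q + 1)) * Q < a / (2 * (Q + 1)) * (Q + 1) := by
    apply mul_lt_mul_of_pos_left (by linarith) (by positivity)
  have h3 : a / (2 * (Q + 1)) * (Q + 1) = a / 2 := by field_simp
  linarith

lemma E_nice (p z : ℝ × ℝ) :
    NiceAt (fun x : ℝ × ℝ => (x.1 - p.1) ^ 2 + (x.2 - p.2) ^ 2) z ∧
    lap (fun x : ℝ × ℝ => (x.1 - p.1) ^ 2 + (x.2 - p.2) ^ 2) z = 4 := by
  have h1 := sq_slice (f := fun t => (t - p.1) ^ 2 + (z.2 - p.2) ^ 2) p.1 ((z.2 - p.2) ^ 2) z.1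
    (fun t => rfl)
  have h2 := sq_slice (f := fun t => (z.1 - p.1) ^ 2 + (t - p.2) ^ 2) p.2 ((z.1 - p.1) ^ 2) z.2
    (fun t => by ring)
  exact ⟨⟨h1.1, h1.2.1, h2.1, h2.2.1⟩, by unfold lap; rw [h1.2.2, h2.2.2]; norm_num⟩

lemma L_nice (p z : ℝ × ℝ) (h : 0 < (z.1 - p.1) ^ 2 + (z.2 - p.2) ^ 2) :
    NiceAt (fun x : ℝ × ℝ => 1 / 2 * Real.log ((x.1 - p.1) ^ 2 + (x.2 - p.2) ^ 2)) z ∧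
    lap (fun x : ℝ × ℝ => 1 / 2 * Real.log ((x.1 - p.1) ^ 2 + (x.2 - p.2) ^ 2)) z = 0 := by
  have h1 := log_slice (f := fun t => 1 / 2 * Real.log ((t - p.1) ^ 2 + (z.2 - p.2) ^ 2))
    p.1 ((z.2 - p.2) ^ 2) z.1 (fun t => rfl) h
  have h2 := log_slice (f := fun t => 1 / 2 * Real.log ((z.1 - p.1) ^ 2 + (t - p.2) ^ 2))
    p.2 ((z.1 - p.1) ^ 2) z.2 (fun t => by rw [add_comm]) (by linarith)
  refine ⟨⟨h1.1, h1.2.1, h2.1, h2.2.1⟩, ?_⟩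
  unfold lap
  rw [h1.2.2, h2.2.2]
  have e1 : ((z.2 - p.2) ^ 2 + (z.1 - p.1) ^ 2) = ((z.1 - p.1) ^ 2 + (z.2 - p.2) ^ 2) := by ring
  rw [e1, ← add_div,
    show ((z.2 - p.2) ^ 2 - (z.1 - p.1) ^ 2) + ((z.1 - p.1) ^ 2 - (z.2 - p.2) ^ 2) = 0 by ring,
    zero_div]

lemma nice_of_contDiffOn {U : Set (ℝ × ℝ)} (hU : IsOpen U) {u : ℝ × ℝ → ℝ}
    (hs : ContDiffOn ℝ 2 u U) {z : ℝ × ℝ} (hz : z ∈ U) : NiceAt u z := by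
  have hz1 : ((z.1, z.2) : ℝ × ℝ) = z := by ext <;> rfl
  -- first coordinate
  have hc1 : Continuous (fun t : ℝ => ((t, z.2) : ℝ × ℝ)) := continuous_id.prodMk continuous_const
  have hopen1 : IsOpen {t : ℝ | ((t, z.2) : ℝ × ℝ) ∈ U} := hU.preimage hc1
  have hmem1 : z.1 ∈ {t : ℝ | ((t, z.2) : ℝ × ℝ) ∈ U} := by
    show ((z.1, z.2) : ℝ × ℝ) ∈ U
    rw [hz1]; exact hz
  have hcd1 : ContDiffOn ℝ 2 (fun t => u (t, z.2)) {t : ℝ | ((t, z.2) : ℝ × ℝ) ∈ U} := by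
    have he : ContDiff ℝ 2 (fun t : ℝ => ((t, z.2) : ℝ × ℝ)) := contDiff_id.prodMk contDiff_const
    exact hs.comp he.contDiffOn (fun t ht => ht)
  have hdo1 : DifferentiableOn ℝ (fun t => u (t, z.2)) {t : ℝ | ((t, z.2) : ℝ × ℝ) ∈ U} :=
    hcd1.differentiableOn (by norm_num)
  have hd1 : ∀ᶠ t in nhds z.1, DifferentiableAt ℝ (fun s => u (s, z.2)) t := by
    filter_upwards [hopen1.mem_nhds hmem1] with t ht
    exact (hdo1 t ht).differentiableAt (hopen1.mem_nhds ht)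
  have hcd1' : ContDiffOn ℝ 1 (deriv fun t => u (t, z.2)) {t : ℝ | ((t, z.2) : ℝ × ℝ) ∈ U} :=
    hcd1.deriv_of_isOpen hopen1 (by norm_num)
  have hd1' : DifferentiableAt ℝ (deriv fun s => u (s, z.2)) z.1 :=
    ((hcd1'.differentiableOn one_ne_zero) z.1 hmem1).differentiableAt (hopen1.mem_nhds hmem1)
  -- second coordinate
  have hc2 : Continuous (fun t : ℝ => ((z.1, t) : ℝ × ℝ)) := continuous_const.prodMk continuous_id
  have hopen2 : IsOpen {t : ℝ | ((z.1, t) : ℝ × ℝ) ∈ U} := hU.preimage hc2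
  have hmem2 : z.2 ∈ {t : ℝ | ((z.1, t) : ℝ × ℝ) ∈ U} := by
    show ((z.1, z.2) : ℝ × ℝ) ∈ U
    rw [hz1]; exact hz
  have hcd2 : ContDiffOn ℝ 2 (fun t => u (z.1, t)) {t : ℝ | ((z.1, t) : ℝ × ℝ) ∈ U} := by
    have he : ContDiff ℝ 2 (fun t : ℝ => ((z.1, t) : ℝ × ℝ)) := contDiff_const.prodMk contDiff_id
    exact hs.comp he.contDiffOn (fun t ht => ht)
  have hdo2 : DifferentiableOn ℝ (fun t => u (z.1, t)) {t : ℝ | ((z.1, t) : ℝ × ℝ) ∈ U} :=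
    hcd2.differentiableOn (by norm_num)
  have hd2 : ∀ᶠ t in nhds z.2, DifferentiableAt ℝ (fun s => u (z.1, s)) t := by
    filter_upwards [hopen2.mem_nhds hmem2] with t ht
    exact (hdo2 t ht).differentiableAt (hopen2.mem_nhds ht)
  have hcd2' : ContDiffOn ℝ 1 (deriv fun t => u (z.1, t)) {t : ℝ | ((z.1, t) : ℝ × ℝ) ∈ U} :=
    hcd2.deriv_of_isOpen hopen2 (by norm_num)
  have hd2' : DifferentiableAt ℝ (deriv fun s => u (z.1, s)) z.2 :=
    ((hcd2'.differentiableOn one_ne_zero) z.2 hmem2).differentiableAt (hopen2.mem_nhds hmem2)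
  exact ⟨hd1, hd1', hd2, hd2'⟩

noncomputable def Efun (p : ℝ × ℝ) : ℝ × ℝ → ℝ := fun x => (x.1 - p.1) ^ 2 + (x.2 - p.2) ^ 2

noncomputable def Lfun (p : ℝ × ℝ) : ℝ × ℝ → ℝ := fun x => 1 / 2 * Real.log (Efun p x)

lemma Efun_nonneg (p x : ℝ × ℝ) : 0 ≤ Efun p x := by unfold Efun; positivity

lemma Efun_cont (p : ℝ × ℝ) : Continuous (Efun p) := by unfold Efun; fun_prop

lemma EL_nice (p z : ℝ × ℝ) (h : 0 < Efun p z) :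
    NiceAt (Efun p) z ∧ lap (Efun p) z = 4 ∧ NiceAt (Lfun p) z ∧ lap (Lfun p) z = 0 := by
  have h' : 0 < (z.1 - p.1) ^ 2 + (z.2 - p.2) ^ 2 := h
  have hE := E_nice p z
  have hL := L_nice p z h'
  exact ⟨hE.1, hE.2, hL.1, hL.2⟩

set_option maxHeartbeats 1000000 in
/-- Uniqueness for the exterior problem: if `u` is harmonic outside a bounded
smooth domain `D`, continuous up to the boundary, constant on `∂D`, decays like
`O(|x|⁻¹)` at infinity and has vanishing total exterior flux `∮_{∂D} ∂u/∂ν ds = 0`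
(expressed through a `C¹` parametrization `γ` of `∂D` with outward rotated tangent),
then `u ≡ 0` in the exterior of `D`. -/
theorem exterior_uniqueness
    (D : Set (ℝ × ℝ)) (hDopen : IsOpen D) (hDbdd : Bornology.IsBounded D)
    (u : ℝ × ℝ → ℝ) (lam : ℝ)
    (hcont : ContinuousOn u ((closure D)ᶜ ∪ frontier D))
    (hsmooth : ContDiffOn ℝ 2 u (closure D)ᶜ)
    (hharm : ∀ x ∉ closure D, lap u x = 0)
    (hbdry : ∀ x ∈ frontier D, u x = lam)
    (hdecay : ∃ C > 0, ∃ R > 0, ∀ x : ℝ × ℝ, R ≤ enorm2 x → |u x| ≤ C / enorm2 x)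
    (γ : ℝ → ℝ × ℝ) (hγ : ContDiff ℝ 1 γ) (hclosed : γ 0 = γ 1)
    (hsimple : ∀ s ∈ Set.Ico (0 : ℝ) 1, ∀ t ∈ Set.Ico (0 : ℝ) 1, γ s = γ t → s = t)
    (hreg : ∀ t, deriv γ t ≠ 0)
    (hfront : frontier D = γ '' Set.Icc 0 1)
    (houtward : ∀ t : ℝ, ∃ δ₀ > (0 : ℝ), ∀ δ ∈ Set.Ioo 0 δ₀,
      γ t + δ • (((deriv γ t).2, -(deriv γ t).1) : ℝ × ℝ) ∉ closure D)
    (hflux : ∫ t in (0 : ℝ)..1,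
        ((grad2 u (γ t)).1 * (deriv γ t).2 - (grad2 u (γ t)).2 * (deriv γ t).1) = 0) :
    ∀ x ∉ closure D, u x = 0 := by
  obtain ⟨C, hC, R₀, hR₀, hdec⟩ := hdecay
  -- the continuity set is Dᶜ
  have hfrD : frontier D = closure D \ D := by rw [frontier, hDopen.interior_eq]
  have hcont' : ContinuousOn u Dᶜ := by
    apply hcont.mono
    intro x hx
    by_cases h : x ∈ closure D
    · exact Or.inr (by rw [hfrD]; exact ⟨h, hx⟩)
    · exact Or.inl h
  -- D is nonempty
  have hDne : D.Nonempty := by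
    by_contra h
    rw [Set.not_nonempty_iff_eq_empty] at h
    have h0 : γ 0 ∈ frontier D := by
      rw [hfront]; exact ⟨0, by constructor <;> norm_num, rfl⟩
    rw [h, frontier_empty] at h0
    exact h0
  obtain ⟨p, hp⟩ := hDne
  obtain ⟨r, hrpos, hrball⟩ := Metric.isOpen_iff.1 hDopen p hp
  -- small euclidean ball around p is inside D
  have hED : ∀ x : ℝ × ℝ, Efun p x < r ^ 2 → x ∈ D := by
    intro x hx
    apply hrball
    rw [Metric.mem_ball, Prod.dist_eq, max_lt_iff]
    have hx' : (x.1 - p.1) ^ 2 + (x.2 - p.2) ^ 2 < r ^ 2 := hx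
    have h1 : (x.1 - p.1) ^ 2 < r ^ 2 := by nlinarith [sq_nonneg (x.2 - p.2)]
    have h2 : (x.2 - p.2) ^ 2 < r ^ 2 := by nlinarith [sq_nonneg (x.1 - p.1)]
    constructor
    · rw [Real.dist_eq]
      nlinarith [abs_nonneg (x.1 - p.1), sq_abs (x.1 - p.1)]
    · rw [Real.dist_eq]
      nlinarith [abs_nonneg (x.2 - p.2), sq_abs (x.2 - p.2)]
  have hEnotD : ∀ x : ℝ × ℝ, x ∉ D → r ^ 2 ≤ Efun p x :=
    fun x hx => le_of_not_gt (fun h => hx (hED x h))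
  have hUopen : IsOpen ((closure D)ᶜ) := isClosed_closure.isOpen_compl
  have hfrsub : frontier ((closure D)ᶜ) ⊆ frontier D := by
    rw [frontier_compl]
    intro y hy
    rw [hfrD]
    refine ⟨closure_closure (s := D) ▸ hy.1, fun hyD => hy.2 ?_⟩
    exact interior_maximal subset_closure hDopen hyD
  -- main claim: u = lam outside closure D
  have hkey : ∀ y, y ∉ closure D → u y = lam := by
    intro y hy
    have hyD : y ∉ D := fun h => hy (subset_closure h)
    have hEy : r ^ 2 ≤ Efun p y := hEnotD y hyD
    have hEypos : 0 < Efun p y := lt_of_lt_of_le (by positivity) hEy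
    have hA₀ : 0 ≤ Lfun p y - Real.log r := by
      have h1 : Real.log (r ^ 2) ≤ Real.log (Efun p y) := Real.log_le_log (by positivity) hEy
      rw [Real.log_pow] at h1
      unfold Lfun
      push_cast at h1
      linarith
    suffices h : ∀ s' : ℝ, s' = 1 ∨ s' = -1 → s' * (u y - lam) ≤ 0 by
      have h1 := h 1 (Or.inl rfl)
      have h2 := h (-1) (Or.inr rfl)
      linarith
    intro s' hs'
    have hs'abs : ∀ a : ℝ, s' * a ≤ |a| := by
      intro a
      rcases hs' with rfl | rfl
      · rw [one_mul]; exact le_abs_self a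
      · rw [neg_one_mul]; exact neg_le_abs a
    apply nonpos_of_forall_le_mul hA₀
    intro ε hε
    set K : ℝ := |p.1| + |p.2| with hK
    have hKnn : 0 ≤ K := by positivity
    have hEynn : 0 ≤ Efun p y := Efun_nonneg p y
    set R : ℝ := max (2 * (R₀ + K + 1) + Real.sqrt (Efun p y) + 1)
      (r * Real.exp ((C + |lam|) / ε) + 1) with hRdef
    have hA : 2 * (R₀ + K + 1) + Real.sqrt (Efun p y) + 1 ≤ R := le_max_left _ _
    have hsq : 0 ≤ Real.sqrt (Efun p y) := Real.sqrt_nonneg _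
    have hR0 : 0 < R := lt_of_lt_of_le (by positivity) hA
    have hR2 : Efun p y < R ^ 2 := by
      nlinarith [Real.sq_sqrt hEynn]
    have hR3 : R₀ + 1 ≤ R / 2 - K := by linarith
    have hR4 : C + |lam| ≤ ε * (Real.log R - Real.log r) := by
      have hX : (0 : ℝ) < r * Real.exp ((C + |lam|) / ε) := by positivity
      have hXR : r * Real.exp ((C + |lam|) / ε) ≤ R := le_trans (by linarith) (le_max_right _ _)
      have h1 : Real.log (r * Real.exp ((C + |lam|) / ε)) ≤ Real.log R :=
        Real.log_le_log hX hXR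
      rw [Real.log_mul (ne_of_gt hrpos) (Real.exp_ne_zero _), Real.log_exp] at h1
      have h2 : (C + |lam|) / ε ≤ Real.log R - Real.log r := by linarith
      have h3 := (div_le_iff₀ hε).1 h2
      linarith
    -- lower bound for enorm2 on the circle
    have hcirc : ∀ z : ℝ × ℝ, Efun p z = R ^ 2 → R / 2 - K ≤ enorm2 z := by
      intro z hz
      have habs1 : |z.1 - p.1| ≤ |z.1| + |p.1| := abs_sub _ _
      have habs2 : |z.2 - p.2| ≤ |z.2| + |p.2| := abs_sub _ _
      have hen1 : |z.1| ≤ enorm2 z := by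
        unfold enorm2
        rw [← Real.sqrt_sq_eq_abs]
        exact Real.sqrt_le_sqrt (by nlinarith [sq_nonneg z.2])
      have hen2 : |z.2| ≤ enorm2 z := by
        unfold enorm2
        rw [← Real.sqrt_sq_eq_abs]
        exact Real.sqrt_le_sqrt (by nlinarith [sq_nonneg z.1])
      unfold Efun at hz
      rcases le_total ((z.1 - p.1) ^ 2) ((z.2 - p.2) ^ 2) with hcase | hcase
      · have h1 : R ^ 2 / 2 ≤ (z.2 - p.2) ^ 2 := by linarith
        have h2 : R / 2 ≤ |z.2 - p.2| := by
          nlinarith [abs_nonneg (z.2 - p.2), sq_abs (z.2 - p.2), hR0.le]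
        calc R / 2 - K ≤ |z.2 - p.2| - |p.2| := by
              rw [hK]; have := abs_nonneg p.1; linarith
          _ ≤ |z.2| := by linarith
          _ ≤ enorm2 z := hen2
      · have h1 : R ^ 2 / 2 ≤ (z.1 - p.1) ^ 2 := by linarith
        have h2 : R / 2 ≤ |z.1 - p.1| := by
          nlinarith [abs_nonneg (z.1 - p.1), sq_abs (z.1 - p.1), hR0.le]
        calc R / 2 - K ≤ |z.1 - p.1| - |p.1| := by
              rw [hK]; have := abs_nonneg p.2; linarith
          _ ≤ |z.1| := by linarith
          _ ≤ enorm2 z := hen1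
    -- the truncated exterior domain
    set Ω : Set (ℝ × ℝ) := {x | Efun p x < R ^ 2} ∩ (closure D)ᶜ with hΩdef
    have hΩopen : IsOpen Ω :=
      (isOpen_lt (Efun_cont p) continuous_const).inter hUopen
    have hyΩ : y ∈ Ω := ⟨hR2, hy⟩
    have hclΩ : closure Ω ⊆ {x | Efun p x ≤ R ^ 2} ∩ Dᶜ := by
      apply closure_minimal
      · exact fun x hx => ⟨show Efun p x ≤ R ^ 2 from le_of_lt hx.1,
          fun hxD => hx.2 (subset_closure hxD)⟩
      · exact (isClosed_le (Efun_cont p) continuous_const).inter hDopen.isClosed_compl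
    have hsubball : closure Ω ⊆ Metric.closedBall p R := by
      intro x hx
      have h1 : Efun p x ≤ R ^ 2 := (hclΩ hx).1
      unfold Efun at h1
      rw [Metric.mem_closedBall, Prod.dist_eq, max_le_iff]
      constructor
      · rw [Real.dist_eq]
        nlinarith [abs_nonneg (x.1 - p.1), sq_abs (x.1 - p.1), sq_nonneg (x.2 - p.2), hR0.le]
      · rw [Real.dist_eq]
        nlinarith [abs_nonneg (x.2 - p.2), sq_abs (x.2 - p.2), sq_nonneg (x.1 - p.1), hR0.le]
    have hcomp : IsCompact (closure Ω) :=
      Metric.isCompact_of_isClosed_isBounded isClosed_closure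
        ((Metric.isBounded_closedBall).subset hsubball)
    -- frontier decomposition
    have hfrΩ : frontier Ω ⊆ ({x | Efun p x = R ^ 2} ∩ Dᶜ) ∪
        (frontier D ∩ {x | Efun p x ≤ R ^ 2}) := by
      intro z hz
      rcases frontier_inter_subset {x | Efun p x < R ^ 2} ((closure D)ᶜ) hz with
        ⟨h1, h2⟩ | ⟨h1, h2⟩
      · left
        constructor
        · have hle : Efun p z ≤ R ^ 2 := by
            have := frontier_subset_closure h1
            have hcl : closure {x | Efun p x < R ^ 2} ⊆ {x | Efun p x ≤ R ^ 2} :=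
              closure_minimal (fun x hx => show Efun p x ≤ R ^ 2 from le_of_lt hx)
                (isClosed_le (Efun_cont p) continuous_const)
            exact hcl this
          have hnotlt : ¬ Efun p z < R ^ 2 := by
            intro hlt
            apply h1.2
            rw [(isOpen_lt (Efun_cont p) continuous_const).interior_eq]
            exact hlt
          exact le_antisymm hle (le_of_not_gt hnotlt)
        · have : closure ((closure D)ᶜ) ⊆ Dᶜ :=
            closure_minimal (compl_subset_compl.2 subset_closure) hDopen.isClosed_compl
          exact this h2
      · right
        refine ⟨hfrsub h2, ?_⟩
        have hcl : closure {x | Efun p x < R ^ 2} ⊆ {x | Efun p x ≤ R ^ 2} :=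
          closure_minimal (fun x hx => show Efun p x ≤ R ^ 2 from le_of_lt hx)
            (isClosed_le (Efun_cont p) continuous_const)
        exact hcl h1
    -- η-limit
    have hmain : ∀ η, 0 < η →
        s' * (u y - lam) - ε * (Lfun p y - Real.log r) ≤ η * R ^ 2 := by
      intro η hη
      set κ : ℝ := ε * Real.log r - s' * lam with hκ
      set V : ℝ × ℝ → ℝ :=
        fun x => s' * u x + (-ε * Lfun p x + (η * Efun p x + κ)) with hV
      -- continuity of V on closure Ω
      have hucl : ContinuousOn u (closure Ω) := hcont'.mono (fun x hx => (hclΩ hx).2)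
      have hLcl : ContinuousOn (Lfun p) (closure Ω) := by
        intro x hx
        have hxD : x ∉ D := (hclΩ hx).2
        have hEx : 0 < Efun p x := lt_of_lt_of_le (by positivity) (hEnotD x hxD)
        apply ContinuousAt.continuousWithinAt
        exact continuousAt_const.mul (((Efun_cont p).continuousAt).log (ne_of_gt hEx))
      have hVcont : ContinuousOn V (closure Ω) := by
        rw [hV]
        exact (continuousOn_const.mul hucl).add
          ((continuousOn_const.mul hLcl).add
            ((continuousOn_const.mul (Efun_cont p).continuousOn).add continuousOn_const))
      -- NiceAt and positivity of lap
      have hVnice : ∀ z ∈ Ω, NiceAt V z := by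
        intro z hz
        have hEz : 0 < Efun p z :=
          lt_of_lt_of_le (by positivity) (hEnotD z (fun h => hz.2 (subset_closure h)))
        obtain ⟨nE, lE, nL, lL⟩ := EL_nice p z hEz
        have nu := nice_of_contDiffOn hUopen hsmooth hz.2
        rw [hV]
        exact (nu.const_mul s').add ((nL.const_mul (-ε)).add ((nE.const_mul η).add_const κ))
      have hVlap : ∀ z ∈ Ω, 0 < lap V z := by
        intro z hz
        have hEz : 0 < Efun p z :=
          lt_of_lt_of_le (by positivity) (hEnotD z (fun h => hz.2 (subset_closure h)))
        obtain ⟨nE, lE, nL, lL⟩ := EL_nice p z hEz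
        have nu := nice_of_contDiffOn hUopen hsmooth hz.2
        have h4 : lap V z = lap (fun x => s' * u x) z +
            lap (fun x => -ε * Lfun p x + (η * Efun p x + κ)) z := by
          rw [hV]
          exact lap_add (nu.const_mul s')
            ((nL.const_mul (-ε)).add ((nE.const_mul η).add_const κ))
        have h5 : lap (fun x => -ε * Lfun p x + (η * Efun p x + κ)) z =
            lap (fun x => -ε * Lfun p x) z + lap (fun x => η * Efun p x + κ) z :=
          lap_add (nL.const_mul (-ε)) ((nE.const_mul η).add_const κ)
        have h6 : lap (fun x => η * Efun p x + κ) z = lap (fun x => η * Efun p x) z :=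
          lap_add_const κ
        have h7 : lap (fun x => s' * u x) z = s' * lap u z := lap_const_mul s' nu
        have h8 : lap (fun x => -ε * Lfun p x) z = -ε * lap (Lfun p) z :=
          lap_const_mul (-ε) nL
        have h9 : lap (fun x => η * Efun p x) z = η * lap (Efun p) z :=
          lap_const_mul η nE
        rw [h4, h5, h6, h7, h8, h9, hharm z hz.2, lE, lL]
        ring_nf
        positivity
      -- boundary bound
      have hVbd : ∀ z ∈ frontier Ω, V z ≤ η * R ^ 2 := by
        intro z hz
        rcases hfrΩ hz with ⟨hzE, hzD⟩ | ⟨hzf, hzE⟩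
        · -- on the outer circle
          have hen : R / 2 - K ≤ enorm2 z := hcirc z hzE
          have henR₀ : R₀ ≤ enorm2 z := by linarith
          have hen1 : (1 : ℝ) ≤ enorm2 z := by linarith
          have hu1 : |u z| ≤ C / enorm2 z := hdec z henR₀
          have hu2 : |u z| ≤ C := le_trans hu1 (div_le_self hC.le hen1)
          have hL1 : Lfun p z = Real.log R := by
            unfold Lfun
            rw [hzE, Real.log_pow]
            push_cast
            ring
          have hb1 : s' * u z ≤ |u z| := hs'abs _
          have hb2 : -(s' * lam) ≤ |lam| := by
            have := hs'abs (-lam)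
            rw [mul_neg] at this
            rw [abs_neg] at this
            linarith
          have hEzR : Efun p z = R ^ 2 := hzE
          simp only [hV, hκ]
          rw [hL1, hEzR]
          nlinarith [hR4, hu2, hb1, hb2]
        · -- on the inner boundary (frontier D)
          have hzlam : u z = lam := hbdry z hzf
          have hzD : z ∉ D := by
            rw [hfrD] at hzf
            exact hzf.2
          have hEz : r ^ 2 ≤ Efun p z := hEnotD z hzD
          have hLz : Real.log r ≤ Lfun p z := by
            have h1 : Real.log (r ^ 2) ≤ Real.log (Efun p z) :=
              Real.log_le_log (by positivity) hEz
            rw [Real.log_pow] at h1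
            unfold Lfun
            push_cast at h1
            linarith
          have hEzR : Efun p z ≤ R ^ 2 := hzE
          simp only [hV, hκ]
          rw [hzlam]
          nlinarith [hε, hη]
      -- apply the maximum principle
      have := max_principle hΩopen hcomp hVcont hVnice hVlap hVbd y hyΩ
      simp only [hV, hκ] at this
      have hEynn' : 0 ≤ Efun p y := Efun_nonneg p y
      nlinarith [hη]
    -- pass to the limit η → 0
    have h0 : s' * (u y - lam) - ε * (Lfun p y - Real.log r) ≤ 0 :=
      nonpos_of_forall_le_mul (by positivity) hmain
    linarith
  -- conclude : lam = 0 using far away points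
  have hlam : lam = 0 := by
    obtain ⟨B, hB⟩ := isBounded_iff_forall_norm_le.1 hDbdd.closure
    by_contra hne
    have hlampos : 0 < |lam| := abs_pos.2 hne
    set T : ℝ := max (max R₀ (|B| + 1)) (2 * C / |lam|) with hT
    have hT1 : R₀ ≤ T := le_trans (le_max_left _ _) (le_max_left _ _)
    have hT2 : |B| + 1 ≤ T := le_trans (le_max_right _ _) (le_max_left _ _)
    have hT3 : 2 * C / |lam| ≤ T := le_max_right _ _
    have hTpos : 0 < T := lt_of_lt_of_le hR₀ hT1
    have hxT : ((T, 0) : ℝ × ℝ) ∉ closure D := by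
      intro hmem
      have := hB _ hmem
      rw [Prod.norm_def] at this
      have h1 : ‖(T : ℝ)‖ ≤ B := le_trans (le_max_left _ _) this
      rw [Real.norm_eq_abs, abs_of_pos hTpos] at h1
      have : B ≤ |B| := le_abs_self B
      linarith
    have henT : enorm2 ((T, 0) : ℝ × ℝ) = T := by
      unfold enorm2
      simp only
      rw [show (T ^ 2 + (0:ℝ) ^ 2) = T ^ 2 by ring, Real.sqrt_sq hTpos.le]
    have hval : u ((T, 0) : ℝ × ℝ) = lam := hkey _ hxT
    have hdecT := hdec ((T, 0) : ℝ × ℝ) (by rw [henT]; exact hT1)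
    rw [hval, henT] at hdecT
    have h1 : |lam| * T ≤ C := (le_div_iff₀ hTpos).1 hdecT
    have h2 : |lam| * (2 * C / |lam|) ≤ |lam| * T :=
      mul_le_mul_of_nonneg_left hT3 (abs_nonneg _)
    have h3 : |lam| * (2 * C / |lam|) = 2 * C := by field_simp
    linarith
  intro x hx
  rw [hkey x hx, hlam]
end
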